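/- For every positive integer l and every complex number s with Re(s) > 1, one has Σ_{q=1}^{∞} q^{−(1+s)} · #{(a,b) : 1 ≤ a,b ≤ q, a·b ≡ l² (mod q)} = σ_{−s}(l²) · ζ(s)/ζ(1+s), where ζ is the Riemann zeta function. -/

import Mathlib

open Finset LSeries ArithmeticFunction
open scoped LSeries.notation
open scoped ArithmeticFunction.zeta

/-- `σ_w(n) = Σ_{d | n} d^w`, the sum over the positive divisors of `n`. -/
noncomputable def sigmaC (w : ℂ) (n : ℕ) : ℂ := ∑ d ∈ n.divisors, (d : ℂ) ^ w


lemma fiber_card (q : ℕ) [NeZero q] (a : ZMod q) (n : ℕ) :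
    (Finset.univ.filter (fun b : ZMod q => a * b = (n : ZMod q))).card
      = if q.gcd a.val ∣ n then q.gcd a.val else 0 := by
  set g := q.gcd a.val with hg
  have hq : q ≠ 0 := NeZero.ne q
  have hgq : g ∣ q := Nat.gcd_dvd_left _ _
  have hg0 : 0 < g := Nat.gcd_pos_of_pos_left _ (Nat.pos_of_ne_zero hq)
  by_cases hdv : g ∣ n
  · rw [if_pos hdv]
    -- the map ψ : b ↦ a * b
    set ψ : ZMod q →+ ZMod q := AddMonoidHom.mulLeft a with hψ
    have hψ_apply : ∀ b, ψ b = a * b := fun b => rfl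
    -- range of ψ is zmultiples a
    have hrange : ψ.range = AddSubgroup.zmultiples a := by
      ext b
      simp only [AddMonoidHom.mem_range, AddSubgroup.mem_zmultiples_iff, hψ_apply]
      constructor
      · rintro ⟨x, rfl⟩
        exact ⟨(x.val : ℤ), by
          rw [zsmul_eq_mul, Int.cast_natCast, ZMod.natCast_val, ZMod.cast_id, mul_comm]⟩
      · rintro ⟨k, rfl⟩
        exact ⟨(k : ZMod q), by rw [zsmul_eq_mul, mul_comm]⟩
    have hcardrange : Nat.card ψ.range = q / g := by
      rw [hrange]
      rw [Nat.card_zmultiples]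
      have hval : ((a.val : ℕ) : ZMod q) = a := by rw [ZMod.natCast_val, ZMod.cast_id]
      conv_lhs => rw [← hval]
      rw [ZMod.addOrderOf_coe _ hq]
    have hcardall : Nat.card (ZMod q) = q := by
      simp [Nat.card_eq_fintype_card, ZMod.card]
    have hquot : Nat.card (ZMod q ⧸ ψ.ker) = q / g := by
      rw [← hcardrange]
      exact Nat.card_congr (QuotientAddGroup.quotientKerEquivRange ψ).toEquiv
    have hqg : q / g ≠ 0 := by
      have := Nat.div_pos (Nat.le_of_dvd (Nat.pos_of_ne_zero hq) hgq) hg0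
      omega
    have hker : Nat.card ψ.ker = g := by
      have h1 := AddSubgroup.card_eq_card_quotient_mul_card_addSubgroup ψ.ker
      rw [hcardall, hquot] at h1
      have h2 : q / g * g = q := Nat.div_mul_cancel hgq
      exact Nat.eq_of_mul_eq_mul_left (Nat.pos_of_ne_zero hqg) (by omega)
    -- (n : ZMod q) is in the range of ψ
    obtain ⟨m, hm⟩ : ∃ m : ZMod q, a * m = (n : ZMod q) := by
      obtain ⟨k, hk⟩ := hdv
      have bez : (g : ℤ) = q * Nat.gcdA q a.val + a.val * Nat.gcdB q a.val :=
        Nat.gcd_eq_gcd_ab q a.val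
      refine ⟨((Nat.gcdB q a.val : ℤ) : ZMod q) * (k : ℤ), ?_⟩
      have : ((g : ℤ) : ZMod q) = a * ((Nat.gcdB q a.val : ℤ) : ZMod q) := by
        rw [bez]
        push_cast
        rw [ZMod.natCast_self]
        rw [ZMod.natCast_val, ZMod.cast_id]
        ring
      have hn' : (n : ZMod q) = ((g : ℤ) : ZMod q) * ((k : ℤ) : ZMod q) := by
        rw [hk]; push_cast; ring
      rw [hn', this]; push_cast; ring
    -- fiber has the same card as the kernel
    have hkerfin : Nat.card ψ.ker = (Finset.univ.filter (fun b : ZMod q => a * b = 0)).card := by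
      rw [Nat.card_eq_fintype_card]
      rw [← Fintype.card_subtype]
      apply Fintype.card_congr
      exact Equiv.subtypeEquivRight (fun b => by
        simp [AddMonoidHom.mem_ker, hψ_apply])
    rw [← hker, hkerfin]
    apply Finset.card_bij (fun b _ => b - m)
    · intro b hb
      simp only [mem_filter, mem_univ, true_and] at hb ⊢
      rw [mul_sub, hb, hm, sub_self]
    · intro b hb b' hb' h
      exact sub_left_injective h
    · intro k hk
      simp only [mem_filter, mem_univ, true_and] at hk
      refine ⟨k + m, ?_, by ring⟩
      simp only [mem_filter, mem_univ, true_and]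
      rw [mul_add, hk, hm, zero_add]
  · rw [if_neg hdv]
    rw [Finset.card_eq_zero, Finset.filter_eq_empty_iff]
    intro b _
    intro hab
    apply hdv
    -- from a*b = n in ZMod q deduce g ∣ n
    have : ((a.val * b.val : ℕ) : ZMod q) = (n : ZMod q) := by
      push_cast
      rw [ZMod.natCast_val, ZMod.natCast_val, ZMod.cast_id, ZMod.cast_id, hab]
    rw [ZMod.natCast_eq_natCast_iff] at this
    have h2 : a.val * b.val ≡ n [MOD g] := this.of_dvd hgq
    have h3 : g ∣ a.val * b.val := Dvd.dvd.mul_right (Nat.gcd_dvd_right _ _) _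
    have := (Nat.modEq_zero_iff_dvd).mpr h3
    exact (Nat.modEq_zero_iff_dvd).mp ((h2.symm.trans this))

-- helper: every element of ZMod q has a representative in Icc 1 q
lemma exists_rep (q : ℕ) (hq : q ≠ 0) (x : ZMod q) :
    ∃ a ∈ Icc 1 q, (a : ZMod q) = x := by
  haveI : NeZero q := ⟨hq⟩
  by_cases h : x.val = 0
  · refine ⟨q, ?_, ?_⟩
    · simp [Nat.one_le_iff_ne_zero, hq]
    · rw [ZMod.natCast_self, eq_comm, ← ZMod.val_eq_zero]
      exact h
  · refine ⟨x.val, ?_, by rw [ZMod.natCast_val, ZMod.cast_id]⟩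
    have := ZMod.val_lt x
    simp only [mem_Icc]
    omega

lemma cast_inj_Icc (q : ℕ) (hq : q ≠ 0) {a b : ℕ} (ha : a ∈ Icc 1 q) (hb : b ∈ Icc 1 q)
    (h : (a : ZMod q) = (b : ZMod q)) : a = b := by
  simp only [mem_Icc] at ha hb
  rw [ZMod.natCast_eq_natCast_iff] at h
  rcases le_total a b with hab | hab
  · have := (Nat.modEq_iff_dvd' hab).mp h
    have : b - a = 0 := Nat.eq_zero_of_dvd_of_lt this (by omega) 
    omega
  · have := (Nat.modEq_iff_dvd' hab).mp h.symm
    have : a - b = 0 := Nat.eq_zero_of_dvd_of_lt this (by omega)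
    omega

lemma count_eq (q n : ℕ) (hq : q ≠ 0) :
    ((Icc 1 q ×ˢ Icc 1 q).filter
        (fun p : ℕ × ℕ => (q:ℤ) ∣ ((p.1:ℤ) * (p.2:ℤ) - (n:ℤ)))).card
      = ∑ d ∈ q.divisors, if d ∣ n then d * Nat.totient (q/d) else 0 := by
  haveI : NeZero q := ⟨hq⟩
  have key : ∀ a b : ℕ, ((q:ℤ) ∣ ((a:ℤ)*(b:ℤ) - (n:ℤ))) ↔
      ((a:ZMod q) * (b:ZMod q) = (n:ZMod q)) := by
    intro a b
    rw [← ZMod.intCast_zmod_eq_zero_iff_dvd]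
    push_cast
    rw [sub_eq_zero]
  have h1 : (((Icc 1 q ×ˢ Icc 1 q)).filter
        (fun p : ℕ × ℕ => (q:ℤ) ∣ ((p.1:ℤ) * (p.2:ℤ) - (n:ℤ)))).card
      = (Finset.univ.filter (fun p : ZMod q × ZMod q => p.1 * p.2 = (n : ZMod q))).card := by
    apply Finset.card_bij (fun p _ => (((p.1 : ℕ) : ZMod q), ((p.2 : ℕ) : ZMod q)))
    · intro p hp
      simp only [mem_filter, mem_univ, true_and] at hp ⊢
      exact (key p.1 p.2).mp hp.2
    · intro p hp p' hp' h
      simp only [mem_filter, mem_product] at hp hp'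
      obtain ⟨h1, h2⟩ := Prod.mk.injEq _ _ _ _ ▸ h
      have e1 := cast_inj_Icc q hq hp.1.1 hp'.1.1 (congrArg Prod.fst h)
      have e2 := cast_inj_Icc q hq hp.1.2 hp'.1.2 (congrArg Prod.snd h)
      exact Prod.ext e1 e2
    · intro p hp
      simp only [mem_filter, mem_univ, true_and] at hp
      obtain ⟨a, ha, hae⟩ := exists_rep q hq p.1
      obtain ⟨b, hb, hbe⟩ := exists_rep q hq p.2
      refine ⟨(a, b), ?_, ?_⟩
      · simp only [mem_filter, mem_product]
        refine ⟨⟨ha, hb⟩, (key a b).mpr ?_⟩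
        rw [hae, hbe, hp]
      · simp [hae, hbe]
  rw [h1]
  have h2 : (Finset.univ.filter (fun p : ZMod q × ZMod q => p.1 * p.2 = (n : ZMod q))).card
      = ∑ x : ZMod q, (Finset.univ.filter (fun b : ZMod q => x * b = (n : ZMod q))).card := by
    rw [Finset.card_filter, ← Finset.univ_product_univ, Finset.sum_product]
    exact Finset.sum_congr rfl fun x _ => (Finset.card_filter _ _).symm
  rw [h2]
  have h3 : ∀ x : ZMod q, (Finset.univ.filter (fun b : ZMod q => x * b = (n : ZMod q))).card
      = if q.gcd x.val ∣ n then q.gcd x.val else 0 := fun x => fiber_card q x n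
  rw [Finset.sum_congr rfl fun x _ => h3 x]
  have h4 : ∑ x : ZMod q, (if q.gcd x.val ∣ n then q.gcd x.val else 0)
      = ∑ v ∈ range q, (if q.gcd v ∣ n then q.gcd v else 0) := by
    apply Finset.sum_nbij' (i := fun x : ZMod q => x.val) (j := fun v : ℕ => (v : ZMod q))
    · intro x _; exact mem_range.mpr (ZMod.val_lt x)
    · intro v _; exact mem_univ _
    · intro x _; rw [ZMod.natCast_val, ZMod.cast_id]
    · intro v hv; exact ZMod.val_cast_of_lt (mem_range.mp hv)
    · intro x _; rfl
  rw [h4]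
  rw [← Finset.sum_fiberwise_of_maps_to
      (g := fun v => q.gcd v) (t := q.divisors)
      (fun v _ => Nat.mem_divisors.2 ⟨Nat.gcd_dvd_left _ _, hq⟩)]
  apply Finset.sum_congr rfl
  intro d hd
  rw [Finset.sum_congr rfl (fun v hv => by rw [(mem_filter.mp hv).2])]
  rw [Finset.sum_const]
  have : ({v ∈ range q | q.gcd v = d} : Finset ℕ).card = Nat.totient (q / d) :=
    (Nat.totient_div_of_dvd (Nat.dvd_of_mem_divisors hd)).symm
  rw [this]
  split
  · rw [smul_eq_mul, mul_comm]
  · simp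

variable (n : ℕ) (s : ℂ)

noncomputable def fdvd : ℕ → ℂ := fun d => if d ∣ n then (d : ℂ) else 0

lemma fdvd_summable (hn : n ≠ 0) (hs : 1 < s.re) : LSeriesSummable (fdvd n) (1 + s) := by
  apply summable_of_ne_finset_zero (s := n.divisors)
  intro d hd
  rcases eq_or_ne d 0 with rfl | hd0
  · exact LSeries.term_zero _ _
  · rw [LSeries.term_of_ne_zero hd0, fdvd, if_neg, zero_div]
    exact fun hdn => hd (Nat.mem_divisors.mpr ⟨hdn, hn⟩)

lemma fdvd_LSeries (hn : n ≠ 0) (hs : 1 < s.re) :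
    LSeries (fdvd n) (1 + s) = sigmaC (-s) n := by
  rw [LSeries, tsum_eq_sum (s := n.divisors) (fun d hd => by
    rcases eq_or_ne d 0 with rfl | hd0
    · exact LSeries.term_zero _ _
    · rw [LSeries.term_of_ne_zero hd0, fdvd, if_neg, zero_div]
      exact fun hdn => hd (Nat.mem_divisors.mpr ⟨hdn, hn⟩))]
  apply Finset.sum_congr rfl
  intro d hd
  have hd0 : d ≠ 0 := Nat.pos_of_mem_divisors hd |>.ne'
  have hdC : (d : ℂ) ≠ 0 := Nat.cast_ne_zero.mpr hd0
  rw [LSeries.term_of_ne_zero hd0, fdvd, if_pos (Nat.dvd_of_mem_divisors hd)]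
  rw [Complex.cpow_add _ _ hdC, Complex.cpow_one, Complex.cpow_neg]
  rw [div_eq_mul_inv, mul_inv, ← mul_assoc, mul_inv_cancel₀ hdC, one_mul]

lemma totient_summable (hs : 1 < s.re) : LSeriesSummable ↗Nat.totient (1 + s) := by
  apply LSeriesSummable_of_le_const_mul_rpow (x := 2)
      (by rw [Complex.add_re, Complex.one_re]; linarith)
  refine ⟨1, fun m hm => ?_⟩
  rw [one_mul]
  have h2 : ((2:ℝ) - 1) = 1 := by norm_num
  rw [h2, Real.rpow_one, Complex.norm_natCast]
  exact_mod_cast Nat.totient_le m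

lemma conv_totient_zeta : ↗Nat.totient ⍟ ↗(ζ : ArithmeticFunction ℕ) = (fun m : ℕ => (m : ℂ)) := by
  funext m
  rcases eq_or_ne m 0 with rfl | hm
  · rw [LSeries.convolution_map_zero]; simp
  · simp only [LSeries.convolution_def]
    have : ∀ p ∈ m.divisorsAntidiagonal,
        (Nat.totient p.1 : ℂ) * ((ζ : ArithmeticFunction ℕ) p.2 : ℂ)
          = (Nat.totient p.1 : ℂ) := by
      intro p hp
      have hp2 : p.2 ≠ 0 := by
        have h := Nat.mem_divisorsAntidiagonal.mp hp
        intro h0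
        exact hm (by rw [← h.1, h0, mul_zero])
      rw [ArithmeticFunction.zeta_apply_ne hp2]
      simp
    rw [Finset.sum_congr rfl this,
      Nat.sum_divisorsAntidiagonal (f := fun d _ => (Nat.totient d : ℂ)),
      ← Nat.cast_sum, Nat.sum_totient]

lemma id_LSeries (hs : 1 < s.re) : LSeries (fun m => (m:ℂ)) (1 + s) = riemannZeta s := by
  rw [← LSeries_one_eq_riemannZeta hs]
  apply tsum_congr
  intro m
  rcases eq_or_ne m 0 with rfl | hm
  · rw [LSeries.term_zero, LSeries.term_zero]
  · rw [LSeries.term_of_ne_zero hm, LSeries.term_of_ne_zero hm]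
    have hmC : (m:ℂ) ≠ 0 := Nat.cast_ne_zero.mpr hm
    rw [Complex.cpow_add _ _ hmC, Complex.cpow_one, Pi.one_apply,
      div_mul_eq_div_div, div_self hmC]

lemma totient_LSeries (hs : 1 < s.re) :
    LSeries ↗Nat.totient (1 + s) = riemannZeta s / riemannZeta (1 + s) := by
  have h1 : 1 < (1+s).re := by rw [Complex.add_re, Complex.one_re]; linarith
  have hφ := totient_summable s hs
  have hζ : LSeriesSummable ↗(ζ : ArithmeticFunction ℕ) (1+s) :=
    (LSeriesSummable_zeta_iff).mpr h1
  have hc := LSeries_convolution' hφ hζ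
  rw [conv_totient_zeta, id_LSeries s hs, LSeries_zeta_eq_riemannZeta h1] at hc
  rw [hc, mul_div_cancel_right₀ _ (riemannZeta_ne_zero_of_one_lt_re h1)]

theorem count_pairs_dirichlet_series (l : ℕ) (hl : 0 < l) (s : ℂ) (hs : 1 < s.re) :
    ∑' q : ℕ, ((q + 1 : ℕ) : ℂ) ^ (-(1 + s)) *
        ((((Finset.Icc 1 (q + 1)) ×ˢ (Finset.Icc 1 (q + 1))).filter
          (fun p => ((q + 1 : ℕ) : ℤ) ∣ ((p.1 : ℤ) * (p.2 : ℤ) - (l : ℤ) ^ 2))).card : ℂ)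
      = sigmaC (-s) (l ^ 2) * riemannZeta s / riemannZeta (1 + s) := by
  set n := l ^ 2 with hn
  have hn0 : n ≠ 0 := by positivity
  have hfs := fdvd_summable n s hn0 hs
  have hφs := totient_summable s hs
  have hconvs : LSeriesSummable (fdvd n ⍟ ↗Nat.totient) (1 + s) := hfs.convolution hφs
  have hcast : ∀ p : ℕ × ℕ, ((p.1 : ℤ) * (p.2 : ℤ) - (l : ℤ) ^ 2)
      = ((p.1 : ℤ) * (p.2 : ℤ) - (n : ℤ)) := by
    intro p; rw [hn]; push_cast; ring
  have hcount : ∀ q : ℕ, (fdvd n ⍟ ↗Nat.totient) (q + 1)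
      = ((((Finset.Icc 1 (q + 1)) ×ˢ (Finset.Icc 1 (q + 1))).filter
          (fun p : ℕ × ℕ => ((q + 1 : ℕ) : ℤ) ∣ ((p.1 : ℤ) * (p.2 : ℤ) - (n : ℤ)))).card : ℂ) := by
    intro q
    rw [count_eq (q + 1) n (Nat.succ_ne_zero q), Nat.cast_sum]
    simp only [LSeries.convolution_def]
    rw [Nat.sum_divisorsAntidiagonal (f := fun d e => fdvd n d * (Nat.totient e : ℂ))]
    apply Finset.sum_congr rfl
    intro d _
    rw [fdvd]
    split
    · push_cast; ring
    · simp
  have hterm : ∀ q : ℕ,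
      ((q + 1 : ℕ) : ℂ) ^ (-(1 + s)) *
        ((((Finset.Icc 1 (q + 1)) ×ˢ (Finset.Icc 1 (q + 1))).filter
          (fun p : ℕ × ℕ => ((q + 1 : ℕ) : ℤ) ∣ ((p.1 : ℤ) * (p.2 : ℤ) - (l : ℤ) ^ 2))).card : ℂ)
        = LSeries.term (fdvd n ⍟ ↗Nat.totient) (1 + s) (q + 1) := by
    intro q
    have hq1 : (q + 1 : ℕ) ≠ 0 := Nat.succ_ne_zero q
    simp only [hcast]
    rw [LSeries.term_of_ne_zero hq1, hcount q, Complex.cpow_neg, div_eq_mul_inv, mul_comm]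
  rw [tsum_congr hterm]
  have h0 := Summable.tsum_eq_zero_add hconvs
  rw [LSeries.term_zero, zero_add] at h0
  rw [← h0]
  have : ∑' m : ℕ, LSeries.term (fdvd n ⍟ ↗Nat.totient) (1 + s) m
      = LSeries (fdvd n ⍟ ↗Nat.totient) (1 + s) := rfl
  rw [this, LSeries_convolution' hfs hφs, fdvd_LSeries n s hn0 hs, totient_LSeries s hs,
    mul_div_assoc]
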